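/- arXiv:2001.11404 — 8 statements merged into one kernel-verified Lean document; each statement's English description precedes it below -/
import Mathlib

section
/- Let J ⊆ ℝ be an open interval, A : J → ℝ a C¹ function, C₁ ≠ 0, C₂ and α₀ real constants such that C₁ξ + C₂ ≠ 0 and A(ξ)/(C₁(C₁ξ+C₂)) > 0 for all ξ ∈ J. Let G : J → ℝ satisfy G'(ξ) = A(ξ)/(C₁(C₁ξ+C₂)) (so G is strictly increasing with inverse G⁻¹ : G(J) → J), and let Q satisfy Q' = A on J. Then the function ρ(t,x) := G⁻¹((x+α₀)/C₁ + t), defined for all (t,x) with (x+α₀)/C₁ + t ∈ G(J), satisfies the non-stationary filtration equation ∂ₜρ = ∂ₓ∂ₓ(Q∘ρ). -/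
/-- The function `ρ(t,x) = G⁻¹((x+α₀)/C₁ + t)`, where `G' = A/(C₁(C₁ξ+C₂)) > 0` on the
open interval `J` and `Q' = A`, satisfies the non-stationary filtration equation
`ρₜ = (Q(ρ))ₓₓ` wherever `(x+α₀)/C₁ + t ∈ G(J)`. -/
theorem filtration_solution_from_first_order_dynamics
    (J : Set ℝ) (hJopen : IsOpen J) (hJconn : J.OrdConnected)
    (A Q G Ginv : ℝ → ℝ) (C₁ C₂ α₀ : ℝ) (hC₁ : C₁ ≠ 0)
    (hA : ContDiffOn ℝ 1 A J)
    (hne : ∀ ξ ∈ J, C₁ * ξ + C₂ ≠ 0)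
    (hGpos : ∀ ξ ∈ J, 0 < A ξ / (C₁ * (C₁ * ξ + C₂)))
    (hG : ∀ ξ ∈ J, HasDerivAt G (A ξ / (C₁ * (C₁ * ξ + C₂))) ξ)
    (hQ : ∀ ξ ∈ J, HasDerivAt Q (A ξ) ξ)
    (hGinv_left : ∀ ξ ∈ J, Ginv (G ξ) = ξ)
    (hGinv_right : ∀ z ∈ G '' J, G (Ginv z) = z)
    (hGinv_mem : ∀ z ∈ G '' J, Ginv z ∈ J)
    (ρ : ℝ → ℝ → ℝ)
    (hρ : ∀ t x : ℝ, ρ t x = Ginv ((x + α₀) / C₁ + t)) :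
    ∀ t x : ℝ, (x + α₀) / C₁ + t ∈ G '' J →
      deriv (fun t' => ρ t' x) t
        = deriv (fun x' => deriv (fun x'' => Q (ρ t x'')) x') x := by
  intro t x hmem
  have hconv : Convex ℝ J := convex_iff_ordConnected.mpr hJconn
  -- G is strictly monotone on J
  have hGmono : StrictMonoOn G J := by
    apply strictMonoOn_of_deriv_pos hconv
      (fun ξ hξ => (hG ξ hξ).continuousAt.continuousWithinAt)
    intro ξ hξ
    rw [hJopen.interior_eq] at hξ
    rw [(hG ξ hξ).deriv]
    exact hGpos ξ hξ
  -- G '' J is open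
  have hopen : IsOpen (G '' J) := by
    rw [isOpen_iff_mem_nhds]
    rintro z ⟨ξ, hξ, rfl⟩
    obtain ⟨ε, hε, hball⟩ := Metric.isOpen_iff.1 hJopen ξ hξ
    have hIcc : Set.Icc (ξ - ε / 2) (ξ + ε / 2) ⊆ J := by
      intro y hy
      apply hball
      rw [Metric.mem_ball, Real.dist_eq, abs_lt]
      exact ⟨by linarith [hy.1], by linarith [hy.2]⟩
    have hab : ξ - ε / 2 ≤ ξ + ε / 2 := by linarith
    have hcont : ContinuousOn G (Set.Icc (ξ - ε / 2) (ξ + ε / 2)) :=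
      fun y hy => (hG y (hIcc hy)).continuousAt.continuousWithinAt
    have hmemA : ξ - ε / 2 ∈ J := hIcc ⟨le_refl _, by linarith⟩
    have hmemB : ξ + ε / 2 ∈ J := hIcc ⟨by linarith, le_refl _⟩
    have h1 : G (ξ - ε / 2) < G ξ := hGmono hmemA hξ (by linarith)
    have h2 : G ξ < G (ξ + ε / 2) := hGmono hξ hmemB (by linarith)
    refine Filter.mem_of_superset (Ioo_mem_nhds h1 h2) ?_
    intro w hw
    obtain ⟨y, hy, hyw⟩ := intermediate_value_Icc hab hcont ⟨hw.1.le, hw.2.le⟩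
    exact ⟨y, hIcc hy, hyw⟩
  -- Ginv is strictly monotone on G '' J
  have hGinvmono : StrictMonoOn Ginv (G '' J) := by
    intro z1 hz1 z2 hz2 hlt
    by_contra h
    push_neg at h
    have := hGmono.monotoneOn (hGinv_mem z2 hz2) (hGinv_mem z1 hz1) h
    rw [hGinv_right z1 hz1, hGinv_right z2 hz2] at this
    exact absurd hlt (not_lt.mpr this)
  have himg : Ginv '' (G '' J) = J := by
    rw [Set.image_image]
    have heq : Set.EqOn (fun ξ => Ginv (G ξ)) id J := fun ξ hξ => hGinv_left ξ hξ
    rw [Set.image_congr heq, Set.image_id]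
  -- Ginv is continuous on G '' J
  have hGinvcont : ∀ z ∈ G '' J, ContinuousAt Ginv z := by
    intro z hz
    apply hGinvmono.continuousAt_of_image_mem_nhds (hopen.mem_nhds hz)
    rw [himg]
    exact hJopen.mem_nhds (hGinv_mem z hz)
  have hAne : ∀ ξ ∈ J, A ξ ≠ 0 := by
    intro ξ hξ h0
    have := hGpos ξ hξ
    rw [h0, zero_div] at this
    exact lt_irrefl 0 this
  -- derivative of Ginv
  have hGinvderiv : ∀ z ∈ G '' J, HasDerivAt Ginv (C₁ * (C₁ * Ginv z + C₂) / A (Ginv z)) z := by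
    intro z hz
    have hξ : Ginv z ∈ J := hGinv_mem z hz
    have h := HasDerivAt.of_local_left_inverse (hGinvcont z hz) (hG _ hξ)
      (ne_of_gt (hGpos _ hξ))
      ((hopen.eventually_mem hz).mono fun w hw => hGinv_right w hw)
    rwa [inv_div] at h
  set z := (x + α₀) / C₁ + t with hz_def
  set ξ := Ginv z with hξ_def
  have hξJ : ξ ∈ J := hGinv_mem z hmem
  set D : ℝ := C₁ * (C₁ * ξ + C₂) / A ξ with hD_def
  -- LHS
  have hLHS : deriv (fun t' => ρ t' x) t = D := by
    have hu : HasDerivAt (fun t' : ℝ => (x + α₀) / C₁ + t') 1 t := by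
      simpa using (hasDerivAt_id t).const_add ((x + α₀) / C₁)
    have := HasDerivAt.comp t (hGinvderiv z hmem) hu
    have h2 : HasDerivAt (fun t' => ρ t' x) (D * 1) t := by
      simp only [hρ]
      exact this
    rw [h2.deriv, mul_one]
  -- inner x-derivative at each point of the open set S
  have hinner : ∀ x' : ℝ, (x' + α₀) / C₁ + t ∈ G '' J →
      deriv (fun x'' => Q (ρ t x'')) x' = C₁ * Ginv ((x' + α₀) / C₁ + t) + C₂ := by
    intro x' hx'
    set z' := (x' + α₀) / C₁ + t with hz'_def
    set ξ' := Ginv z' with hξ'_def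
    have hξ'J : ξ' ∈ J := hGinv_mem z' hx'
    have hu : HasDerivAt (fun x'' : ℝ => (x'' + α₀) / C₁ + t) (1 / C₁) x' := by
      have : HasDerivAt (fun x'' : ℝ => (x'' + α₀) / C₁) (1 / C₁) x' := by
        simpa using ((hasDerivAt_id x').add_const α₀).div_const C₁
      simpa using this.add_const t
    have hg : HasDerivAt (fun x'' : ℝ => Ginv ((x'' + α₀) / C₁ + t))
        (C₁ * (C₁ * ξ' + C₂) / A ξ' * (1 / C₁)) x' :=
      HasDerivAt.comp x' (hGinvderiv z' hx') hu
    have hq : HasDerivAt (fun x'' => Q (ρ t x''))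
        (A ξ' * (C₁ * (C₁ * ξ' + C₂) / A ξ' * (1 / C₁))) x' := by
      simp only [hρ]
      exact HasDerivAt.comp x' (hQ ξ' hξ'J) hg
    rw [hq.deriv]
    field_simp [hAne ξ' hξ'J, hC₁]
  -- the outer derivative
  have hScont : Continuous fun x' : ℝ => (x' + α₀) / C₁ + t := by fun_prop
  have hSopen : IsOpen {x' : ℝ | (x' + α₀) / C₁ + t ∈ G '' J} :=
    hopen.preimage hScont
  have hev : (fun x' => deriv (fun x'' => Q (ρ t x'')) x')
      =ᶠ[nhds x] (fun x' => C₁ * Ginv ((x' + α₀) / C₁ + t) + C₂) := by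
    filter_upwards [hSopen.mem_nhds hmem] with x' hx'
    exact hinner x' hx'
  rw [hLHS, hev.deriv_eq]
  have hu : HasDerivAt (fun x' : ℝ => (x' + α₀) / C₁ + t) (1 / C₁) x := by
    have : HasDerivAt (fun x' : ℝ => (x' + α₀) / C₁) (1 / C₁) x := by
      simpa using ((hasDerivAt_id x).add_const α₀).div_const C₁
    simpa using this.add_const t
  have hR : HasDerivAt (fun x' => C₁ * Ginv ((x' + α₀) / C₁ + t) + C₂)
      (C₁ * (D * (1 / C₁))) x :=
    (((hGinvderiv z hmem).comp x hu).const_mul C₁).add_const C₂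
  rw [hR.deriv]
  field_simp
end

section
/- Let n > 2, set ν := 1 + 2/n, and let σ₀ ∈ ℝ satisfy exp(3σ₀/(4n)) > (1/(4ν))·(1+ν)^{1+ν}·(2−ν)^{2−ν}. Then with E := exp(3σ₀/(4n)), for every ρ ∈ (0,3): −6ρ² + 24E·ν·ρ^{ν}·(3−ρ)^{−1−ν} > 0. Consequently Q'(ρ) = (k/μ)(−6ρ² + 24E·ν·ρ^{ν}(3−ρ)^{−1−ν}) is strictly positive on (0,3) for any k, μ > 0, so any antiderivative G of Q'(ρ)/(C₁(C₁ρ+C₂)) with C₁(C₁ρ+C₂) > 0 on (0,3) is strictly monotone, hence invertible. -/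
/-- Isentropic van der Waals filtration: if `exp(3σ₀/(4n)) > (1/(4ν))(1+ν)^{1+ν}(2-ν)^{2-ν}`
with `ν = 1 + 2/n`, `n > 2`, then `-6ρ² + 24Eν ρ^ν (3-ρ)^{-1-ν} > 0` on `(0,3)`; hence
`Q'(ρ) = (k/μ)(…) > 0` there, and any antiderivative `G` of `Q'(ρ)/(C₁(C₁ρ+C₂))` with
`C₁(C₁ρ+C₂) > 0` on `(0,3)` is strictly monotone (hence invertible). -/
theorem vdw_isentropic_invertibility
    (n σ₀ ν E : ℝ) (hn : 2 < n) (hν : ν = 1 + 2 / n)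
    (hE : E = Real.exp (3 * σ₀ / (4 * n)))
    (hσ : E > 1 / (4 * ν) * (1 + ν) ^ (1 + ν : ℝ) * (2 - ν) ^ (2 - ν : ℝ)) :
    (∀ ρ ∈ Set.Ioo (0 : ℝ) 3,
        0 < -6 * ρ ^ 2 + 24 * E * ν * ρ ^ (ν : ℝ) * (3 - ρ) ^ (-1 - ν : ℝ)) ∧
    (∀ k μ : ℝ, 0 < k → 0 < μ →
      (∀ ρ ∈ Set.Ioo (0 : ℝ) 3,
          0 < k / μ * (-6 * ρ ^ 2
                + 24 * E * ν * ρ ^ (ν : ℝ) * (3 - ρ) ^ (-1 - ν : ℝ))) ∧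
      (∀ C₁ C₂ : ℝ, (∀ ρ ∈ Set.Ioo (0 : ℝ) 3, 0 < C₁ * (C₁ * ρ + C₂)) →
        ∀ G : ℝ → ℝ,
          (∀ ρ ∈ Set.Ioo (0 : ℝ) 3,
            HasDerivAt G
              (k / μ * (-6 * ρ ^ 2
                  + 24 * E * ν * ρ ^ (ν : ℝ) * (3 - ρ) ^ (-1 - ν : ℝ))
                / (C₁ * (C₁ * ρ + C₂))) ρ) →
          StrictMonoOn G (Set.Ioo (0 : ℝ) 3))) := by
  have hn0 : (0 : ℝ) < n := by linarith
  have hν1 : 1 < ν := by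
    rw [hν]; have : 0 < 2 / n := by positivity
    linarith
  have hν2 : ν < 2 := by
    rw [hν]; have : 2 / n < 1 := (div_lt_one hn0).2 hn
    linarith
  set a : ℝ := 2 - ν with ha_def
  set b : ℝ := 1 + ν with hb_def
  have ha : 0 < a := by simp [ha_def]; linarith
  have hb : 0 < b := by simp [hb_def]; linarith
  have hab : a + b = 3 := by simp [ha_def, hb_def]; ring
  -- key AM-GM bound
  have key : ∀ ρ ∈ Set.Ioo (0 : ℝ) 3,
      ρ ^ (a : ℝ) * (3 - ρ) ^ (b : ℝ) ≤ a ^ (a : ℝ) * b ^ (b : ℝ) := by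
    rintro ρ ⟨hρ0, hρ3⟩
    have h3 : 0 < 3 - ρ := by linarith
    have hgm := Real.geom_mean_le_arith_mean2_weighted
      (le_of_lt (by positivity : (0:ℝ) < a / 3))
      (le_of_lt (by positivity : (0:ℝ) < b / 3))
      (le_of_lt (by positivity : (0:ℝ) < ρ / a))
      (le_of_lt (by positivity : (0:ℝ) < (3 - ρ) / b))
      (by field_simp; linarith)
    have hone : a / 3 * (ρ / a) + b / 3 * ((3 - ρ) / b) = 1 := by
      field_simp
      ring
    rw [hone] at hgm
    have ht0 : 0 ≤ (ρ / a) ^ (a / 3 : ℝ) * ((3 - ρ) / b) ^ (b / 3 : ℝ) := by positivity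
    have hcube : ((ρ / a) ^ (a / 3 : ℝ) * ((3 - ρ) / b) ^ (b / 3 : ℝ)) ^ (3 : ℕ) ≤ 1 :=
      pow_le_one₀ ht0 hgm
    have hexp : ((ρ / a) ^ (a / 3 : ℝ) * ((3 - ρ) / b) ^ (b / 3 : ℝ)) ^ (3 : ℕ)
        = (ρ / a) ^ (a : ℝ) * ((3 - ρ) / b) ^ (b : ℝ) := by
      rw [mul_pow, ← Real.rpow_natCast ((ρ / a) ^ (a / 3 : ℝ)) 3,
        ← Real.rpow_natCast (((3 - ρ) / b) ^ (b / 3 : ℝ)) 3,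
        ← Real.rpow_mul (by positivity), ← Real.rpow_mul (by positivity)]
      norm_num
    rw [hexp, Real.div_rpow hρ0.le ha.le, Real.div_rpow h3.le hb.le] at hcube
    have hpos : 0 < a ^ (a : ℝ) * b ^ (b : ℝ) := by positivity
    rw [div_mul_div_comm, div_le_one hpos] at hcube
    exact hcube
  have main : ∀ ρ ∈ Set.Ioo (0 : ℝ) 3,
      0 < -6 * ρ ^ 2 + 24 * E * ν * ρ ^ (ν : ℝ) * (3 - ρ) ^ (-1 - ν : ℝ) := by
    intro ρ hρ
    obtain ⟨hρ0, hρ3⟩ := hρ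
    have h3 : 0 < 3 - ρ := by linarith
    have hν0 : 0 < ν := by linarith
    have hE0 : 0 < E := by rw [hE]; exact Real.exp_pos _
    have hP : (3 - ρ) ^ (-1 - ν : ℝ) = ((3 - ρ) ^ (b : ℝ))⁻¹ := by
      rw [hb_def, show (-1 - ν : ℝ) = -(1 + ν) by ring, Real.rpow_neg h3.le]
    have hPb : 0 < (3 - ρ) ^ (b : ℝ) := Real.rpow_pos_of_pos h3 _
    have hρν : 0 < ρ ^ (ν : ℝ) := Real.rpow_pos_of_pos hρ0 _
    have hsq : ρ ^ 2 = ρ ^ (ν : ℝ) * ρ ^ (a : ℝ) := by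
      rw [← Real.rpow_add hρ0, ha_def]
      norm_num
    have hbound : ρ ^ (a : ℝ) * (3 - ρ) ^ (b : ℝ) < 4 * ν * E := by
      have h1 := key ρ ⟨hρ0, hρ3⟩
      have h2 : a ^ (a : ℝ) * b ^ (b : ℝ) < 4 * ν * E := by
        have h4ν : 0 < 4 * ν := by positivity
        rw [gt_iff_lt, show 1 / (4 * ν) * (1 + ν) ^ (1 + ν : ℝ) * (2 - ν) ^ (2 - ν : ℝ)
          = (a ^ (a : ℝ) * b ^ (b : ℝ)) / (4 * ν) by rw [ha_def, hb_def]; ring,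
          div_lt_iff₀ h4ν] at hσ
        nlinarith [hσ]
      linarith
    -- reduce to hbound
    have hgoal : 6 * ρ ^ 2 < 24 * E * ν * ρ ^ (ν : ℝ) * (3 - ρ) ^ (-1 - ν : ℝ) := by
      rw [hP, hsq, ← div_eq_mul_inv, lt_div_iff₀ hPb]
      nlinarith [mul_lt_mul_of_pos_left hbound (by positivity : (0:ℝ) < 6 * ρ ^ (ν : ℝ))]
    linarith
  refine ⟨main, fun k μ hk hμ => ?_⟩
  have hkμ : 0 < k / μ := div_pos hk hμ
  refine ⟨fun ρ hρ => mul_pos hkμ (main ρ hρ), ?_⟩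
  intro C₁ C₂ hC G hG
  have hconv : Convex ℝ (Set.Ioo (0 : ℝ) 3) := convex_Ioo _ _
  apply strictMonoOn_of_deriv_pos hconv
  · intro x hx
    exact ((hG x hx).continuousAt).continuousWithinAt
  · intro x hx
    rw [interior_Ioo] at hx
    rw [(hG x hx).deriv]
    exact div_pos (mul_pos hkμ (main x hx)) (hC x hx)
end

section
/- Let n ≥ 3 and suppose the enthalpy constant η₀ satisfies η₀ > 2(n−2)²(2n+5)/(3n(n+2)). Then for every ρ ∈ (0,3): 3η₀(n+2) + ρ(6−3n)(6+3n) + 6nρ²(n+1) − n²ρ³ > 0. Consequently Q'(ρ) = 6kρ/(μ(6+3n−ρn)²)·(3η₀(n+2) + ρ(6−3n)(6+3n) + 6nρ²(n+1) − n²ρ³) is strictly positive on (0,3) for any k, μ > 0, so any antiderivative G of Q'(ρ)/(C₁(C₁ρ+C₂)) with C₁(C₁ρ+C₂) > 0 on (0,3) is strictly monotone, hence invertible. -/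
/-- Isenthalpic van der Waals filtration: if `n ≥ 3` and
`η₀ > 2(n-2)²(2n+5)/(3n(n+2))`, then the cubic
`3η₀(n+2) + ρ(6-3n)(6+3n) + 6nρ²(n+1) - n²ρ³` is positive on `(0,3)`; hence
`Q'(ρ) = 6kρ/(μ(6+3n-ρn)²)(…) > 0` there, and any antiderivative `G` of
`Q'(ρ)/(C₁(C₁ρ+C₂))` with `C₁(C₁ρ+C₂) > 0` on `(0,3)` is strictly monotone
(hence invertible). -/
theorem vdw_isenthalpic_invertibility
    (n η₀ : ℝ) (hn : 3 ≤ n)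
    (hη : η₀ > 2 * (n - 2) ^ 2 * (2 * n + 5) / (3 * n * (n + 2))) :
    (∀ ρ ∈ Set.Ioo (0 : ℝ) 3,
        0 < 3 * η₀ * (n + 2) + ρ * (6 - 3 * n) * (6 + 3 * n)
              + 6 * n * ρ ^ 2 * (n + 1) - n ^ 2 * ρ ^ 3) ∧
    (∀ k μ : ℝ, 0 < k → 0 < μ →
      (∀ ρ ∈ Set.Ioo (0 : ℝ) 3,
          0 < 6 * k * ρ / (μ * (6 + 3 * n - ρ * n) ^ 2)
                * (3 * η₀ * (n + 2) + ρ * (6 - 3 * n) * (6 + 3 * n)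
                    + 6 * n * ρ ^ 2 * (n + 1) - n ^ 2 * ρ ^ 3)) ∧
      (∀ C₁ C₂ : ℝ, (∀ ρ ∈ Set.Ioo (0 : ℝ) 3, 0 < C₁ * (C₁ * ρ + C₂)) →
        ∀ G : ℝ → ℝ,
          (∀ ρ ∈ Set.Ioo (0 : ℝ) 3,
            HasDerivAt G
              (6 * k * ρ / (μ * (6 + 3 * n - ρ * n) ^ 2)
                  * (3 * η₀ * (n + 2) + ρ * (6 - 3 * n) * (6 + 3 * n)
                      + 6 * n * ρ ^ 2 * (n + 1) - n ^ 2 * ρ ^ 3)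
                / (C₁ * (C₁ * ρ + C₂))) ρ) →
          StrictMonoOn G (Set.Ioo (0 : ℝ) 3))) := by
  have hn0 : (0 : ℝ) < n := by linarith
  have hden : (0 : ℝ) < 3 * n * (n + 2) := by nlinarith
  have hη' : 2 * (n - 2) ^ 2 * (2 * n + 5) < η₀ * (3 * n * (n + 2)) :=
    (div_lt_iff₀ hden).mp hη
  have hcubic : ∀ ρ ∈ Set.Ioo (0 : ℝ) 3,
      0 < 3 * η₀ * (n + 2) + ρ * (6 - 3 * n) * (6 + 3 * n)
            + 6 * n * ρ ^ 2 * (n + 1) - n ^ 2 * ρ ^ 3 := by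
    intro ρ hρ
    obtain ⟨hρ0, hρ3⟩ := hρ
    have key : n * (3 * η₀ * (n + 2) + ρ * (6 - 3 * n) * (6 + 3 * n)
        + 6 * n * ρ ^ 2 * (n + 1) - n ^ 2 * ρ ^ 3)
        = η₀ * (3 * n * (n + 2)) - 2 * (n - 2) ^ 2 * (2 * n + 5)
          + (n * ρ - (n - 2)) ^ 2 * (4 * n + 10 - n * ρ) := by ring
    have h1 : 0 < 4 * n + 10 - n * ρ := by nlinarith
    have h2 : 0 ≤ (n * ρ - (n - 2)) ^ 2 * (4 * n + 10 - n * ρ) :=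
      mul_nonneg (sq_nonneg _) h1.le
    have hpos : 0 < n * (3 * η₀ * (n + 2) + ρ * (6 - 3 * n) * (6 + 3 * n)
        + 6 * n * ρ ^ 2 * (n + 1) - n ^ 2 * ρ ^ 3) := by
      rw [key]; linarith
    by_contra h
    push_neg at h
    nlinarith
  refine ⟨hcubic, fun k μ hk hμ => ?_⟩
  have hQ : ∀ ρ ∈ Set.Ioo (0 : ℝ) 3,
      0 < 6 * k * ρ / (μ * (6 + 3 * n - ρ * n) ^ 2)
            * (3 * η₀ * (n + 2) + ρ * (6 - 3 * n) * (6 + 3 * n)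
                + 6 * n * ρ ^ 2 * (n + 1) - n ^ 2 * ρ ^ 3) := by
    intro ρ hρ
    obtain ⟨hρ0, hρ3⟩ := hρ
    have hb : 0 < 6 + 3 * n - ρ * n := by nlinarith
    have hd : 0 < μ * (6 + 3 * n - ρ * n) ^ 2 := by positivity
    have hnum : 0 < 6 * k * ρ := by positivity
    exact mul_pos (div_pos hnum hd) (hcubic ρ ⟨hρ0, hρ3⟩)
  refine ⟨hQ, fun C₁ C₂ hC G hG => ?_⟩
  apply StrictMonoOn.mono (s := Set.Ioo (0:ℝ) 3) ?_ le_rfl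
  have hopen : IsOpen (Set.Ioo (0:ℝ) 3) := isOpen_Ioo
  apply strictMonoOn_of_deriv_pos (convex_Ioo 0 3)
  · intro x hx
    exact ((hG x hx).differentiableAt.continuousAt).continuousWithinAt
  · intro x hx
    rw [interior_Ioo] at hx
    rw [(hG x hx).deriv]
    exact div_pos (hQ x hx) (hC x hx)
end

section
/- Let α ∈ ℝ, q > 0, and let b₁ equal either −α + 1 or −α/2 + 1. On the half-plane {(y₀,y₁) ∈ ℝ² : y₀ > 0} define f(y₀,y₁) := b₁·y₁²/y₀, φ(y₀,y₁) := q(α + b₁)·y₀^{α−1}·y₁², and the vector field D acting on smooth functions g by (Dg)(y₀,y₁) = y₁·∂g/∂y₀ + f(y₀,y₁)·∂g/∂y₁. Then the Lie equation D(Dφ) = (∂f/∂y₀)·φ + (∂f/∂y₁)·(Dφ) holds identically on {y₀ > 0}; i.e., φ is a shuffle symmetry of the second-order ODE y'' = b₁(y')²/y, so this ODE is a second-order finite-dimensional dynamics for the evolutionary equation ρₜ = qρ^α ρₓₓ + qαρ^{α−1}(ρₓ)². -/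
/-- For `b₁ = -α+1` or `b₁ = -α/2+1`, the function `φ = q(α+b₁) y₀^{α-1} y₁²` satisfies
the Lie equation `D(Dφ) = f_{y₀} φ + f_{y₁} Dφ` for the second-order ODE
`y'' = f(y₀,y₁) = b₁ y₁²/y₀` with total derivative `D = y₁ ∂_{y₀} + f ∂_{y₁}`; i.e. `φ`
is a shuffle symmetry, so the ODE is a second-order finite-dimensional dynamics for
`ρₜ = qρ^α ρₓₓ + qαρ^{α-1}(ρₓ)²`. -/
theorem second_order_dynamics_shuffle_symmetry
    (α q b₁ : ℝ) (hq : 0 < q) (hb : b₁ = -α + 1 ∨ b₁ = -α / 2 + 1)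
    (f φ : ℝ → ℝ → ℝ)
    (hf : ∀ y₀ y₁ : ℝ, f y₀ y₁ = b₁ * y₁ ^ 2 / y₀)
    (hφ : ∀ y₀ y₁ : ℝ, φ y₀ y₁ = q * (α + b₁) * y₀ ^ (α - 1 : ℝ) * y₁ ^ 2)
    (D : (ℝ → ℝ → ℝ) → ℝ → ℝ → ℝ)
    (hD : ∀ g : ℝ → ℝ → ℝ, ∀ y₀ y₁ : ℝ,
      D g y₀ y₁ = y₁ * deriv (fun s => g s y₁) y₀
        + f y₀ y₁ * deriv (fun s => g y₀ s) y₁) :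
    ∀ y₀ y₁ : ℝ, 0 < y₀ →
      D (D φ) y₀ y₁
        = deriv (fun s => f s y₁) y₀ * φ y₀ y₁
          + deriv (fun s => f y₀ s) y₁ * D φ y₀ y₁ := by
  set c : ℝ := q * (α + b₁) with hc
  set K : ℝ := c * (α - 1 + 2 * b₁) with hK
  -- formula for D φ off y₀ = 0
  have hDφ : ∀ y₀ : ℝ, y₀ ≠ 0 → ∀ y₁ : ℝ,
      D φ y₀ y₁ = K * y₀ ^ (α - 3 : ℝ) * y₀ * y₁ ^ 3 := by
    intro y₀ h0 y₁
    have hd0 : deriv (fun s => φ s y₁) y₀ = c * ((α - 1) * y₀ ^ (α - 1 - 1 : ℝ)) * y₁ ^ 2 := by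
      have : (fun s => φ s y₁) = fun s => c * s ^ (α - 1 : ℝ) * y₁ ^ 2 := by
        funext s; rw [hφ]
      rw [this]
      exact (((Real.hasDerivAt_rpow_const (Or.inl h0)).const_mul c).mul_const (y₁ ^ 2)).deriv
    have hd1 : deriv (fun s => φ y₀ s) y₁ = c * y₀ ^ (α - 1 : ℝ) * (2 * y₁ ^ 1) := by
      have : (fun s => φ y₀ s) = fun s => c * y₀ ^ (α - 1 : ℝ) * s ^ 2 := by
        funext s; rw [hφ]
      rw [this]
      exact ((hasDerivAt_pow 2 y₁).const_mul (c * y₀ ^ (α - 1 : ℝ))).deriv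
    have e1 : (α - 1 - 1 : ℝ) = (α - 3) + 1 := by ring
    have e2 : (α - 1 : ℝ) = (α - 3) + 1 + 1 := by ring
    rw [hD, hd0, hd1, hf, e1, e2, Real.rpow_add_one h0, Real.rpow_add_one h0,
      Real.rpow_add_one h0]
    field_simp
    ring
  intro y₀ y₁ hy
  have h0 : y₀ ≠ 0 := ne_of_gt hy
  -- derivative of D φ in first slot
  have hdd0 : deriv (fun s => D φ s y₁) y₀
      = K * ((α - 2) * y₀ ^ (α - 2 - 1 : ℝ)) * y₁ ^ 3 := by
    have hev : (fun s => D φ s y₁) =ᶠ[nhds y₀] fun s => K * s ^ (α - 2 : ℝ) * y₁ ^ 3 := by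
      filter_upwards [eventually_ne_nhds h0] with s hs
      rw [hDφ s hs y₁, show (α - 2 : ℝ) = (α - 3) + 1 by ring, Real.rpow_add_one hs]
      ring
    rw [hev.deriv_eq]
    exact (((Real.hasDerivAt_rpow_const (Or.inl h0)).const_mul K).mul_const (y₁ ^ 3)).deriv
  -- derivative of D φ in second slot
  have hdd1 : deriv (fun s => D φ y₀ s) y₁
      = K * y₀ ^ (α - 3 : ℝ) * y₀ * (3 * y₁ ^ 2) := by
    have : (fun s => D φ y₀ s) = fun s => K * y₀ ^ (α - 3 : ℝ) * y₀ * s ^ 3 := by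
      funext s; exact hDφ y₀ h0 s
    rw [this]
    simp [((hasDerivAt_pow 3 y₁).const_mul (K * y₀ ^ (α - 3 : ℝ) * y₀)).deriv]
  -- derivatives of f
  have hf0 : deriv (fun s => f s y₁) y₀ = b₁ * y₁ ^ 2 * -(y₀ ^ 2)⁻¹ := by
    have : (fun s => f s y₁) = fun s => b₁ * y₁ ^ 2 * s⁻¹ := by
      funext s; rw [hf]; ring
    rw [this]
    exact ((hasDerivAt_inv h0).const_mul (b₁ * y₁ ^ 2)).deriv
  have hf1 : deriv (fun s => f y₀ s) y₁ = b₁ * (2 * y₁ ^ 1) / y₀ := by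
    have : (fun s => f y₀ s) = fun s => b₁ * s ^ 2 / y₀ := by
      funext s; rw [hf]
    rw [this]
    exact (((hasDerivAt_pow 2 y₁).const_mul b₁).div_const y₀).deriv
  have e3 : (α - 2 - 1 : ℝ) = α - 3 := by ring
  have e4 : (α - 1 : ℝ) = (α - 3) + 1 + 1 := by ring
  rw [hD, hdd0, hdd1, hf, hf0, hf1, hφ, hDφ y₀ h0 y₁, e3, e4,
    Real.rpow_add_one h0, Real.rpow_add_one h0]
  rcases hb with rfl | rfl <;> (rw [hc, hK]; field_simp; ring)
end

section
/- Let α ∈ ℝ with α ≠ 0 and α ≠ −2, q > 0, and let y : I → ℝ be a twice differentiable function on an open interval I with y(x) > 0 and y'(x) ≠ 0 for all x ∈ I, satisfying y'' = (1 − α/2)·(y')²/y on I. Then the two functions x ↦ −x + 2y(x)/(α·y'(x)) and x ↦ 2·y(x)^{2−α}/(q·α·(α+2)·y'(x)²) are constant on I. -/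
lemma exists_const_of_hasDerivAt_zero (I : Set ℝ) (hIopen : IsOpen I)
    (hIconn : I.OrdConnected) (f : ℝ → ℝ)
    (h : ∀ x ∈ I, HasDerivAt f 0 x) : ∃ c : ℝ, ∀ x ∈ I, f x = c := by
  rcases I.eq_empty_or_nonempty with rfl | ⟨x₀, hx₀⟩
  · exact ⟨0, by simp⟩
  · refine ⟨f x₀, fun x hx => ?_⟩
    refine hIconn.convex.is_const_of_fderivWithin_eq_zero
      (fun z hz => (h z hz).differentiableAt.differentiableWithinAt) ?_ hx hx₀
    intro z hz
    rw [fderivWithin_of_isOpen hIopen hz, (h z hz).hasFDerivAt.fderiv]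
    ext
    simp

/-- For a positive twice differentiable solution of `y'' = (1-α/2)(y')²/y` with
nonvanishing derivative on an open interval, the two first integrals
`-x + 2y/(αy')` and `2y^{2-α}/(qα(α+2)(y')²)` are constant. -/
theorem first_integrals_of_second_order_dynamics
    (α q : ℝ) (hα0 : α ≠ 0) (hα2 : α ≠ -2) (hq : 0 < q)
    (I : Set ℝ) (hIopen : IsOpen I) (hIconn : I.OrdConnected)
    (y : ℝ → ℝ)
    (hy1 : ∀ x ∈ I, DifferentiableAt ℝ y x)
    (hy2 : ∀ x ∈ I, DifferentiableAt ℝ (deriv y) x)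
    (hpos : ∀ x ∈ I, 0 < y x)
    (hy' : ∀ x ∈ I, deriv y x ≠ 0)
    (hode : ∀ x ∈ I,
      deriv (deriv y) x = (1 - α / 2) * (deriv y x) ^ 2 / y x) :
    (∃ c₁ : ℝ, ∀ x ∈ I, -x + 2 * y x / (α * deriv y x) = c₁) ∧
    (∃ c₂ : ℝ, ∀ x ∈ I,
      2 * y x ^ (2 - α : ℝ) / (q * α * (α + 2) * (deriv y x) ^ 2) = c₂) := by
  have hα2' : α + 2 ≠ 0 := fun h => hα2 (by linarith)
  constructor
  · refine exists_const_of_hasDerivAt_zero I hIopen hIconn _ (fun x hx => ?_)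
    have hyx : y x ≠ 0 := (hpos x hx).ne'
    have hy'x : deriv y x ≠ 0 := hy' x hx
    have h1 : HasDerivAt y (deriv y x) x := (hy1 x hx).hasDerivAt
    have h2 : HasDerivAt (deriv y) (deriv (deriv y) x) x := (hy2 x hx).hasDerivAt
    have hden : α * deriv y x ≠ 0 := mul_ne_zero hα0 hy'x
    have hd : HasDerivAt (fun t => -t + 2 * y t / (α * deriv y t))
        (-1 + ((2 * deriv y x) * (α * deriv y x) -
          (2 * y x) * (α * deriv (deriv y) x)) / (α * deriv y x) ^ 2) x :=
      (hasDerivAt_id x).neg.add ((h1.const_mul 2).div (h2.const_mul α) hden)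
    convert hd using 1
    rw [hode x hx]
    field_simp
    ring
  · refine exists_const_of_hasDerivAt_zero I hIopen hIconn _ (fun x hx => ?_)
    have hyx : y x ≠ 0 := (hpos x hx).ne'
    have hy'x : deriv y x ≠ 0 := hy' x hx
    have h1 : HasDerivAt y (deriv y x) x := (hy1 x hx).hasDerivAt
    have h2 : HasDerivAt (deriv y) (deriv (deriv y) x) x := (hy2 x hx).hasDerivAt
    have hden : q * α * (α + 2) * (deriv y x) ^ 2 ≠ 0 := by
      apply mul_ne_zero (mul_ne_zero (mul_ne_zero hq.ne' hα0) hα2') (pow_ne_zero _ hy'x)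
    have hnum : HasDerivAt (fun t => 2 * y t ^ (2 - α : ℝ))
        (2 * (deriv y x * (2 - α) * y x ^ (2 - α - 1 : ℝ))) x :=
      (h1.rpow_const (Or.inl hyx)).const_mul 2
    have hden' : HasDerivAt (fun t => q * α * (α + 2) * (deriv y t) ^ 2)
        (q * α * (α + 2) * ((2 : ℕ) * deriv y x ^ (2 - 1) * deriv (deriv y) x)) x :=
      (h2.pow 2).const_mul _
    have hd := hnum.div hden' hden
    refine hd.congr_deriv (Eq.symm ?_)
    rw [hode x hx]
    have hsplit : y x ^ (2 - α : ℝ) = y x * y x ^ (2 - α - 1 : ℝ) := by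
      rw [show (2 - α : ℝ) = 1 + (2 - α - 1) by ring, Real.rpow_add (hpos x hx),
        Real.rpow_one]
      norm_num
    rw [hsplit]
    field_simp
    ring
end

section
/- Let α ∈ ℝ with α ≠ 0 and α ≠ −2, let q > 0 and let C₁, C₂ be constants with α/(2C₂q(α+2)) > 0. Then the function y(x) := (2C₂q(α+2)/(α(C₁+x)²))^{−1/α}, defined for x ≠ −C₁, satisfies y > 0 and the ODE y'' = (1 − α/2)·(y')²/y on each component of {x : x ≠ −C₁}. -/
/-- The function `y(x) = (2C₂q(α+2)/(α(C₁+x)²))^{-1/α}` is positive and satisfies the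
second-order dynamics `y'' = (1-α/2)(y')²/y` away from `x = -C₁`. -/
theorem exact_solution_of_second_order_dynamics
    (α q C₁ C₂ : ℝ) (hα0 : α ≠ 0) (hα2 : α ≠ -2) (hq : 0 < q)
    (hsign : 0 < α / (2 * C₂ * q * (α + 2)))
    (y : ℝ → ℝ)
    (hy : ∀ x : ℝ,
      y x = (2 * C₂ * q * (α + 2) / (α * (C₁ + x) ^ 2)) ^ (-1 / α : ℝ)) :
    ∀ x : ℝ, x ≠ -C₁ →
      0 < y x ∧
      deriv (deriv y) x = (1 - α / 2) * (deriv y x) ^ 2 / y x := by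
  have hB : 0 < 2 * C₂ * q * (α + 2) / α := by
    rw [show (2 * C₂ * q * (α + 2) / α) = (α / (2 * C₂ * q * (α + 2)))⁻¹ from (inv_div _ _).symm]
    exact inv_pos.mpr hsign
  set A := (2 * C₂ * q * (α + 2) / α) ^ (-1 / α : ℝ) with hA_def
  have hApos : 0 < A := Real.rpow_pos_of_pos hB _
  have hiα : (1 / α : ℝ) ≠ 0 := one_div_ne_zero hα0
  have hniα : (-1 / α : ℝ) ≠ 0 := by
    simpa [neg_div] using neg_ne_zero.mpr hiα
  have hyeq : y = fun z => A * ((C₁ + z) ^ 2) ^ (1 / α : ℝ) := by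
    funext z
    rw [hy z]
    by_cases hz : C₁ + z = 0
    · have h1 : (2:ℝ) * C₂ * q * (α + 2) / (α * (C₁ + z) ^ 2) = 0 := by
        rw [hz]; simp
      rw [h1, hz, Real.zero_rpow hniα]
      rw [show ((0:ℝ) ^ 2 : ℝ) = 0 by norm_num, Real.zero_rpow hiα, mul_zero]
    · have hu : (0:ℝ) < (C₁ + z) ^ 2 := by positivity
      rw [show 2 * C₂ * q * (α + 2) / (α * (C₁ + z) ^ 2)
            = (2 * C₂ * q * (α + 2) / α) / ((C₁ + z) ^ 2) from (div_div _ _ _).symm]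
      rw [Real.div_rpow hB.le hu.le]
      rw [show (-1/α : ℝ) = -(1/α) by ring, Real.rpow_neg hu.le]
      rw [div_eq_mul_inv, inv_inv, hA_def]
      norm_num [neg_div]
  have hder : ∀ (p : ℝ) (z : ℝ), C₁ + z ≠ 0 →
      HasDerivAt (fun w => ((C₁ + w) ^ 2) ^ (p : ℝ))
        (p * ((C₁ + z) ^ 2) ^ (p - 1) * (2 * (C₁ + z))) z := by
    intro p z hz
    have h1 : HasDerivAt (fun w => C₁ + w) 1 z := (hasDerivAt_id z).const_add C₁
    have h2 : HasDerivAt (fun w => (C₁ + w) ^ 2) (2 * (C₁ + z)) z := by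
      simpa using h1.fun_pow 2
    have h3 := h2.rpow_const (p := p) (Or.inl (pow_ne_zero 2 hz))
    convert h3 using 1
    ring
  set s : ℝ := 1 / α - 1 with hs_def
  set φ : ℝ → ℝ := fun z => (2 * A / α) * ((C₁ + z) * ((C₁ + z) ^ 2) ^ (s : ℝ)) with hφ_def
  have hyd : ∀ z : ℝ, C₁ + z ≠ 0 → HasDerivAt y (φ z) z := by
    intro z hz
    rw [hyeq]
    have := ((hder (1/α) z hz).const_mul A)
    convert this using 1
    · rfl
    · rfl
    rw [hφ_def, hs_def]; ring
  intro x hx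
  have hx' : C₁ + x ≠ 0 := fun h => hx (by linarith)
  have hu : (0:ℝ) < (C₁ + x) ^ 2 := by positivity
  have hypos : 0 < y x := by
    rw [hyeq]
    exact mul_pos hApos (Real.rpow_pos_of_pos hu _)
  refine ⟨hypos, ?_⟩
  have hmem : {z : ℝ | C₁ + z ≠ 0} ∈ nhds x := by
    have : IsOpen {z : ℝ | C₁ + z ≠ 0} :=
      isOpen_ne.preimage (by fun_prop : Continuous fun z : ℝ => C₁ + z)
    exact this.mem_nhds hx'
  have hEq : deriv y =ᶠ[nhds x] φ :=
    Filter.eventuallyEq_of_mem hmem fun z hz => ((hyd z hz).deriv)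
  have hdy : deriv y x = φ x := (hyd x hx').deriv
  have hφd : HasDerivAt φ
      ((2 * A / α) * (1 * ((C₁ + x) ^ 2) ^ (s : ℝ)
        + (C₁ + x) * (s * ((C₁ + x) ^ 2) ^ (s - 1) * (2 * (C₁ + x))))) x := by
    have h1 : HasDerivAt (fun w => C₁ + w) 1 x := (hasDerivAt_id x).const_add C₁
    exact ((h1.mul (hder s x hx')).const_mul _)
  have hdd : deriv (deriv y) x = deriv φ x := hEq.deriv_eq
  rw [hdd, hφd.deriv, hdy]
  simp only [hyeq, hφ_def]
  have hPu : ((C₁ + x) ^ 2 : ℝ) ^ (1 / α : ℝ)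
      = ((C₁ + x) ^ 2) ^ (s : ℝ) * (C₁ + x) ^ 2 := by
    rw [← Real.rpow_add_one (ne_of_gt hu) s, hs_def]; norm_num
  have hPQ : ((C₁ + x) ^ 2 : ℝ) ^ (s - 1 : ℝ) * (C₁ + x) ^ 2
      = ((C₁ + x) ^ 2) ^ (s : ℝ) := by
    rw [← Real.rpow_add_one (ne_of_gt hu) (s - 1)]; norm_num
  have hPpos : (0:ℝ) < ((C₁ + x) ^ 2) ^ (s : ℝ) := Real.rpow_pos_of_pos hu _
  rw [hPu]
  generalize hQg : ((C₁ + x) ^ 2 : ℝ) ^ (s - 1 : ℝ) = Q at hPQ ⊢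
  generalize hPg : ((C₁ + x) ^ 2 : ℝ) ^ (s : ℝ) = P at hPQ hPpos ⊢
  have hQeq : Q = P / (C₁ + x) ^ 2 := by
    field_simp [← hPQ]
    exact hPQ
  rw [hQeq, hs_def]
  field_simp
  ring
end

section
/- Let α ∈ ℝ with α ≠ 0 and α ≠ −2, q > 0, and C₁, C₂ ∈ ℝ. Define ρ(t,x) := (α(x+C₁)²/(2q(α+2)(C₂−t)))^{1/α} on the open set of (t,x) where x ≠ −C₁ and α/((α+2)(C₂−t)) > 0. Then ρ > 0 and ρ satisfies the filtration equation ρₜ = qρ^α ρₓₓ + qαρ^{α−1}(ρₓ)² on this set. -/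
/-- The function `ρ(t,x) = (α(x+C₁)²/(2q(α+2)(C₂-t)))^{1/α}` is positive and satisfies
the filtration equation `ρₜ = qρ^α ρₓₓ + qαρ^{α-1}(ρₓ)²` on the open set where
`x ≠ -C₁` and `α/((α+2)(C₂-t)) > 0`. -/
theorem blow_up_solution_solves_filtration
    (α q C₁ C₂ : ℝ) (hα0 : α ≠ 0) (hα2 : α ≠ -2) (hq : 0 < q)
    (ρ : ℝ → ℝ → ℝ)
    (hρ : ∀ t x : ℝ,
      ρ t x = (α * (x + C₁) ^ 2 / (2 * q * (α + 2) * (C₂ - t))) ^ (1 / α : ℝ)) :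
    ∀ t x : ℝ, x ≠ -C₁ → 0 < α / ((α + 2) * (C₂ - t)) →
      0 < ρ t x ∧
      deriv (fun t' => ρ t' x) t
        = q * ρ t x ^ (α : ℝ)
              * deriv (fun x' => deriv (fun x'' => ρ t x'') x') x
          + q * α * ρ t x ^ (α - 1 : ℝ)
              * (deriv (fun x'' => ρ t x'') x) ^ 2 := by
  intro t x hx ht
  have hα2' : α + 2 ≠ 0 := fun h => hα2 (by linarith)
  have hq' : q ≠ 0 := ne_of_gt hq
  have hCt : C₂ - t ≠ 0 := by
    intro h
    rw [h, mul_zero, div_zero] at ht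
    exact lt_irrefl 0 ht
  have hx' : x + C₁ ≠ 0 := fun h => hx (by linarith)
  set k : ℝ := α / (2 * q * (α + 2) * (C₂ - t)) with hk_def
  have hk : 0 < k := by
    have h2 : k = α / ((α + 2) * (C₂ - t)) / (2 * q) := by
      rw [hk_def, div_div]
      congr 1
      ring
    rw [h2]
    exact div_pos ht (by positivity)
  have hk' : k ≠ 0 := ne_of_gt hk
  set B : ℝ := k * (x + C₁) ^ 2 with hB_def
  have hB : 0 < B := mul_pos hk (by positivity)
  have hρtx : ρ t x = B ^ (1 / α : ℝ) := by
    rw [hρ, hB_def, hk_def, div_mul_eq_mul_div]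
  set r : ℝ := B ^ (1 / α : ℝ) with hr_def
  have hr : 0 < r := Real.rpow_pos_of_pos hB _
  have hr' : r ≠ 0 := ne_of_gt hr
  refine ⟨by rw [hρtx]; exact hr, ?_⟩
  -- spatial derivative of ρ at any point y with y + C₁ ≠ 0
  have hderiv_x : ∀ y : ℝ, y + C₁ ≠ 0 →
      HasDerivAt (fun x'' => ρ t x'')
        (1 / α * (k * (y + C₁) ^ 2) ^ (1 / α - 1 : ℝ) * (2 * k * (y + C₁))) y := by
    intro y hy
    have hb' : 0 < k * (y + C₁) ^ 2 := mul_pos hk (by positivity)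
    have h1 : HasDerivAt (fun x'' : ℝ => k * (x'' + C₁) ^ 2) (2 * k * (y + C₁)) y := by
      have h0 : HasDerivAt (fun x'' : ℝ => x'' + C₁) 1 y := (hasDerivAt_id y).add_const C₁
      have := (h0.pow 2).const_mul k
      refine this.congr_deriv ?_
      ring
    have h2 := (Real.hasDerivAt_rpow_const (x := k * (y + C₁) ^ 2) (p := (1 / α : ℝ))
        (Or.inl (ne_of_gt hb'))).comp y h1
    have hfun : (fun x'' => ρ t x'') = fun x'' : ℝ => (k * (x'' + C₁) ^ 2) ^ (1 / α : ℝ) := by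
      funext x''
      rw [hρ, hk_def, div_mul_eq_mul_div]
    rw [hfun]
    exact h2
  have hdx := hderiv_x x hx'
  -- eventual formula for the derivative near x
  have hev : (fun y => 1 / α * (k * (y + C₁) ^ 2) ^ (1 / α - 1 : ℝ) * (2 * k * (y + C₁)))
      =ᶠ[nhds x] deriv (fun x'' => ρ t x'') := by
    have hcont : ContinuousAt (fun y : ℝ => y + C₁) x := by fun_prop
    filter_upwards [hcont.eventually_ne hx'] with y hy
    exact ((hderiv_x y hy).deriv).symm
  -- second spatial derivative
  have hG : HasDerivAt (fun y : ℝ => (k * (y + C₁) ^ 2) ^ (1 / α - 1 : ℝ))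
      ((1 / α - 1) * B ^ (1 / α - 1 - 1 : ℝ) * (2 * k * (x + C₁))) x := by
    have h1 : HasDerivAt (fun x'' : ℝ => k * (x'' + C₁) ^ 2) (2 * k * (x + C₁)) x := by
      have h0 : HasDerivAt (fun x'' : ℝ => x'' + C₁) 1 x := (hasDerivAt_id x).add_const C₁
      have := (h0.pow 2).const_mul k
      refine this.congr_deriv ?_
      ring
    exact (Real.hasDerivAt_rpow_const (x := B) (p := (1 / α - 1 : ℝ))
        (Or.inl (ne_of_gt hB))).comp x h1
  have h3 : HasDerivAt (fun y : ℝ => 2 * k * (y + C₁)) (2 * k) x := by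
    have h0 : HasDerivAt (fun y : ℝ => y + C₁) 1 x := (hasDerivAt_id x).add_const C₁
    have := h0.const_mul (2 * k)
    refine this.congr_deriv ?_
    ring
  have heq : (fun y => 1 / α * (k * (y + C₁) ^ 2) ^ (1 / α - 1 : ℝ) * (2 * k * (y + C₁)))
      = fun y : ℝ => 1 / α * ((k * (y + C₁) ^ 2) ^ (1 / α - 1 : ℝ) * (2 * k * (y + C₁))) := by
    funext y; ring
  have hH := (hG.mul h3).const_mul (1 / α)
  have hdd : deriv (fun x' => deriv (fun x'' => ρ t x'') x') x
      = 1 / α * ((1 / α - 1) * B ^ (1 / α - 1 - 1 : ℝ) * (2 * k * (x + C₁)) * (2 * k * (x + C₁))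
        + (k * (x + C₁) ^ 2) ^ (1 / α - 1 : ℝ) * (2 * k)) := by
    rw [← Filter.EventuallyEq.deriv_eq hev, heq]
    exact hH.deriv
  -- time derivative
  set m : ℝ := α * (x + C₁) ^ 2 / (2 * q * (α + 2)) with hm_def
  have hmB : m * (C₂ - t)⁻¹ = B := by
    rw [hB_def, hk_def, hm_def, ← div_eq_mul_inv, div_div, div_mul_eq_mul_div]
  have hdt : HasDerivAt (fun t' => ρ t' x)
      (1 / α * B ^ (1 / α - 1 : ℝ) * (B / (C₂ - t))) t := by
    have hg : HasDerivAt (fun t' : ℝ => C₂ - t') (-1) t := (hasDerivAt_id t).const_sub C₂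
    have hinv := (hg.inv hCt).const_mul m
    have h2 := (Real.hasDerivAt_rpow_const (x := m * (C₂ - t)⁻¹) (p := (1 / α : ℝ))
        (Or.inl (by rw [hmB]; exact ne_of_gt hB))).comp t hinv
    have hfun : (fun t' => ρ t' x) = fun t' : ℝ => (m * (C₂ - t')⁻¹) ^ (1 / α : ℝ) := by
      funext t'
      rw [hρ, hm_def, ← div_eq_mul_inv, div_div]
    rw [hfun]
    refine h2.congr_deriv ?_
    rw [hmB]; congr 1; rw [← hmB]; field_simp
  rw [hρtx, hdt.deriv, hdd, hdx.deriv]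
  simp only [← hB_def]
  -- rewrite rpow powers in terms of r and B
  have e0 : r ^ (α : ℝ) = B := by
    rw [hr_def, ← Real.rpow_mul hB.le, one_div_mul_cancel hα0, Real.rpow_one]
  have e1 : r ^ (α - 1 : ℝ) = B / r := by
    rw [hr_def, ← Real.rpow_mul hB.le,
      show (1 / α) * (α - 1) = 1 - 1 / α by field_simp,
      Real.rpow_sub hB, Real.rpow_one, ← hr_def]
  have e2 : B ^ (1 / α - 1 : ℝ) = r / B := by
    rw [Real.rpow_sub hB, Real.rpow_one, ← hr_def]
  have e3 : B ^ (1 / α - 1 - 1 : ℝ) = r / B ^ 2 := by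
    rw [show (1 / α - 1 - 1 : ℝ) = 1 / α - (2 : ℕ) by push_cast; ring,
      Real.rpow_sub hB, Real.rpow_natCast, ← hr_def]
  have hqk : 2 * q * k * ((α + 2) * (C₂ - t)) = α := by
    rw [hk_def]
    field_simp
  rw [e0, e1, e2, e3, hB_def]
  field_simp
  linear_combination (-1 : ℝ) * hqk
end

section
/- Let α ≠ 0, q > 0 and C₁, C₂ ∈ ℝ. Define ρ(t,x) := (C₁²αqt + C₁αx + C₂α)^{1/α} on the open set of (t,x) where C₁²αqt + C₁αx + C₂α > 0. Then ρ > 0 and ρ satisfies the filtration equation ρₜ = qρ^α ρₓₓ + qαρ^{α−1}(ρₓ)² on this set; moreover ρ is a travelling wave, i.e. ρ(t,x) = h(x + C₁qt) with h(s) = (αC₁s + αC₂)^{1/α}. -/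
private lemma affine_rpow_hasDerivAt (a b p x : ℝ) (h : a * x + b ≠ 0) :
    HasDerivAt (fun y => (a * y + b) ^ p) (p * (a * x + b) ^ (p - 1) * a) x := by
  have h1 : HasDerivAt (fun y : ℝ => a * y + b) a x := by
    simpa using ((hasDerivAt_id x).const_mul a).add_const b
  exact (Real.hasDerivAt_rpow_const (p := p) (Or.inl h)).comp x h1

/-- The function `ρ(t,x) = (C₁²αqt + C₁αx + C₂α)^{1/α}` is positive where its argument
is positive, satisfies the filtration equation `ρₜ = qρ^α ρₓₓ + qαρ^{α-1}(ρₓ)²` there,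
and is a travelling wave: `ρ(t,x) = h(x + C₁qt)` with `h(s) = (αC₁s + αC₂)^{1/α}`. -/
theorem travelling_wave_solution
    (α q C₁ C₂ : ℝ) (hα : α ≠ 0) (hq : 0 < q)
    (ρ : ℝ → ℝ → ℝ) (h : ℝ → ℝ)
    (hρ : ∀ t x : ℝ,
      ρ t x = (C₁ ^ 2 * α * q * t + C₁ * α * x + C₂ * α) ^ (1 / α : ℝ))
    (hh : ∀ s : ℝ, h s = (α * C₁ * s + α * C₂) ^ (1 / α : ℝ)) :
    ∀ t x : ℝ, 0 < C₁ ^ 2 * α * q * t + C₁ * α * x + C₂ * α →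
      0 < ρ t x ∧
      deriv (fun t' => ρ t' x) t
        = q * ρ t x ^ (α : ℝ)
              * deriv (fun x' => deriv (fun x'' => ρ t x'') x') x
          + q * α * ρ t x ^ (α - 1 : ℝ)
              * (deriv (fun x'' => ρ t x'') x) ^ 2 ∧
      ρ t x = h (x + C₁ * q * t) := by
  intro t x hu
  set a : ℝ := C₁ * α with ha
  set c : ℝ := C₁ ^ 2 * α * q * t + C₂ * α with hc
  set b : ℝ := C₁ ^ 2 * α * q with hb
  set d : ℝ := C₁ * α * x + C₂ * α with hd
  set u : ℝ := C₁ ^ 2 * α * q * t + C₁ * α * x + C₂ * α with huu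
  have hax : a * x + c = u := by rw [ha, hc, huu]; ring
  have hbt : b * t + d = u := by rw [hb, hd, huu]; ring
  have hupos : 0 < u := hu
  have hE : 0 < u ^ (1 / α : ℝ) := Real.rpow_pos_of_pos hupos _
  have hρtx : ρ t x = u ^ (1 / α : ℝ) := hρ t x
  refine ⟨by rw [hρtx]; exact hE, ?_, ?_⟩
  · -- the PDE
    -- time derivative
    have hfunt : (fun t' => ρ t' x) = fun t' => (b * t' + d) ^ (1 / α : ℝ) := by
      funext t'
      rw [hρ t' x]
      congr 1
      rw [hb, hd]; ring
    have hderivt : deriv (fun t' => ρ t' x) t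
        = (1 / α) * u ^ (1 / α - 1 : ℝ) * b := by
      rw [hfunt]
      have := (affine_rpow_hasDerivAt b d (1 / α) t (by rw [hbt]; exact hupos.ne')).deriv
      rw [this, hbt]
    -- spatial derivative formula on a neighborhood
    have hfunx : ∀ t₀, (fun x'' => ρ t₀ x'') = fun x'' =>
        (a * x'' + (C₁ ^ 2 * α * q * t₀ + C₂ * α)) ^ (1 / α : ℝ) := by
      intro t₀
      funext x''
      rw [hρ t₀ x'']
      congr 1
      rw [ha]; ring
    have hderivx : ∀ x', 0 < a * x' + c →
        deriv (fun x'' => ρ t x'') x'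
          = (1 / α) * (a * x' + c) ^ (1 / α - 1 : ℝ) * a := by
      intro x' hx'
      rw [hfunx t]
      exact (affine_rpow_hasDerivAt a c (1 / α) x' hx'.ne').deriv
    have hd1 : deriv (fun x'' => ρ t x'') x = (1 / α) * u ^ (1 / α - 1 : ℝ) * a := by
      rw [hderivx x (by rw [hax]; exact hupos), hax]
    -- second spatial derivative
    have hopen : IsOpen {x' : ℝ | 0 < a * x' + c} :=
      isOpen_lt continuous_const (by continuity)
    have hmem : {x' : ℝ | 0 < a * x' + c} ∈ nhds x :=
      hopen.mem_nhds (by simp only [Set.mem_setOf_eq, hax]; exact hupos)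
    have hEq : (fun x' => deriv (fun x'' => ρ t x'') x')
        =ᶠ[nhds x] (fun x' => (1 / α) * (a * x' + c) ^ (1 / α - 1 : ℝ) * a) :=
      Filter.eventuallyEq_of_mem hmem (fun x' hx' => hderivx x' hx')
    have hd2 : deriv (fun x' => deriv (fun x'' => ρ t x'') x') x
        = (1 / α) * ((1 / α - 1) * u ^ (1 / α - 1 - 1 : ℝ) * a) * a := by
      rw [hEq.deriv_eq]
      have h1 : HasDerivAt (fun x' => (1 / α) * (a * x' + c) ^ (1 / α - 1 : ℝ) * a)
          ((1 / α) * ((1 / α - 1) * (a * x + c) ^ (1 / α - 1 - 1 : ℝ) * a) * a) x := by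
        have := affine_rpow_hasDerivAt a c (1 / α - 1) x (by rw [hax]; exact hupos.ne')
        have h2 := (this.const_mul (1 / α)).mul_const a
        exact h2
      rw [h1.deriv, hax]
    -- now algebra with rpow
    rw [hderivt, hd1, hd2, hρtx]
    have e1 : (u ^ (1 / α : ℝ)) ^ (α : ℝ) = u := by
      rw [← Real.rpow_mul hupos.le, one_div_mul_cancel hα, Real.rpow_one]
    have e2 : (u ^ (1 / α : ℝ)) ^ (α - 1 : ℝ) = u / u ^ (1 / α : ℝ) := by
      rw [Real.rpow_sub hE, e1, Real.rpow_one]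
    have e3 : u ^ (1 / α - 1 : ℝ) = u ^ (1 / α : ℝ) / u := by
      rw [Real.rpow_sub hupos, Real.rpow_one]
    have e4 : u ^ (1 / α - 1 - 1 : ℝ) = u ^ (1 / α : ℝ) / u / u := by
      rw [Real.rpow_sub hupos, Real.rpow_sub hupos, Real.rpow_one]
    rw [e1, e2, e3, e4, ha, hb]
    have hEne : u ^ (1 / α : ℝ) ≠ 0 := hE.ne'
    field_simp
    ring
  · rw [hρtx, hh]
    congr 1
    rw [← hax, ha, hc]
    ring
end
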